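/- For every integer n ≥ 0, the number of proper colorings of G with color set {1, …, n} satisfies χ_G(n) = Σ_{π ∈ S_d} C(n + d − c(π), d), where the sum is over all permutations π of [d], c(π) is the number of cuts of π with respect to G, and C(·,·) is the binomial coefficient. -/

import Mathlib

/-- `ellSpec G a k p` says that there are positions `i₁ < i₂ < ⋯ < i_p < i_{p+1} = k`
such that `a_{i_j}` and `a_{i_{j+1}}` are adjacent in `G` for all `j`. -/
def ellSpec {d : ℕ} (G : SimpleGraph (Fin d)) (a : Equiv.Perm (Fin d)) (k : Fin d)
    (p : ℕ) : Prop :=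
  ∃ c : Fin (p + 1) → Fin d, StrictMono c ∧ c (Fin.last p) = k ∧
    ∀ j : Fin p, G.Adj (a (c j.castSucc)) (a (c j.succ))

/-- `ell G a k` is the largest `p` such that `ellSpec G a k p` holds: the length of the
longest increasing path in `a` ending at position `k`. -/
noncomputable def ell {d : ℕ} (G : SimpleGraph (Fin d)) (a : Equiv.Perm (Fin d))
    (k : Fin d) : ℕ :=
  sSup {p | ellSpec G a k p}

/-- `j` is a cut of `a` (with respect to `G`): either `j` is the first position, or
comparing with the preceding position `i` we have `ℓ(i) < ℓ(j)`, or `ℓ(i) = ℓ(j)` and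
`a_i < a_j`.  (Cuts are located at the first position of each block; this is the
0-indexed version of the paper's cuts `k ∈ [0, d-1]`.) -/
noncomputable def IsCut {d : ℕ} (G : SimpleGraph (Fin d)) (a : Equiv.Perm (Fin d))
    (j : Fin d) : Prop :=
  (j : ℕ) = 0 ∨ ∃ i : Fin d, (i : ℕ) + 1 = (j : ℕ) ∧
    (ell G a i < ell G a j ∨ (ell G a i = ell G a j ∧ a i < a j))

/-- `c(π)`: the number of cuts of the permutation `a` with respect to `G`. -/
noncomputable def numCuts {d : ℕ} (G : SimpleGraph (Fin d))
    (a : Equiv.Perm (Fin d)) : ℕ :=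
  Nat.card {j : Fin d // IsCut G a j}

/-- `χ_G(n)`: the number of proper colorings of `G` with color set `{1, …, n}`. -/
noncomputable def chromVal {d : ℕ} (G : SimpleGraph (Fin d)) (n : ℕ) : ℕ :=
  Nat.card {φ : Fin d → Fin n // ∀ u v : Fin d, G.Adj u v → φ u ≠ φ v}

namespace ChromAux

theorem sm_val_le {m d : ℕ} {c : Fin m → Fin d} (hc : StrictMono c) (j : Fin m) :
    (j : ℕ) ≤ (c j : ℕ) := by
  obtain ⟨jv, hjv⟩ := j
  induction jv with
  | zero => exact Nat.zero_le _
  | succ v ih =>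
    have hv : v < m := by omega
    have h2 : (c ⟨v, hv⟩ : ℕ) < (c ⟨v + 1, hjv⟩ : ℕ) := hc (Fin.mk_lt_mk.mpr (by omega))
    have h3 : v ≤ (c ⟨v, hv⟩ : ℕ) := ih hv
    show v + 1 ≤ (c ⟨v + 1, hjv⟩ : ℕ)
    omega

variable {d : ℕ} {G : SimpleGraph (Fin d)} {a : Equiv.Perm (Fin d)}

theorem ellSpec_zero (k : Fin d) : ellSpec G a k 0 := by
  refine ⟨fun _ => k, fun i j hij => absurd hij (by omega), rfl, fun j => j.elim0⟩

theorem ellSpec_lt {k : Fin d} {p : ℕ} (h : ellSpec G a k p) : p < d := by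
  obtain ⟨c, hc, hlast, -⟩ := h
  have h1 := sm_val_le hc (Fin.last p)
  have h2 := (c (Fin.last p)).isLt
  simp only [Fin.val_last] at h1
  omega

theorem ellSpec_ell (k : Fin d) : ellSpec G a k (ell G a k) := by
  have hne : {p | ellSpec G a k p}.Nonempty := ⟨0, ellSpec_zero k⟩
  have hbdd : BddAbove {p | ellSpec G a k p} := ⟨d, fun p hp => (ellSpec_lt hp).le⟩
  exact Nat.sSup_mem hne hbdd

theorem le_ell {k : Fin d} {p : ℕ} (h : ellSpec G a k p) : p ≤ ell G a k :=
  le_csSup ⟨d, fun q hq => (ellSpec_lt hq).le⟩ h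

theorem ellSpec_succ_of_adj {k m : Fin d} {p : ℕ} (hkm : k < m) (hadj : G.Adj (a k) (a m))
    (h : ellSpec G a k p) : ellSpec G a m (p + 1) := by
  obtain ⟨c, hc, hlast, hadjs⟩ := h
  have hcle : ∀ i, c i ≤ k := fun i => hlast ▸ hc.monotone (Fin.le_last i)
  refine ⟨Fin.snoc c m, ?_, by simp, ?_⟩
  · intro x y hxy
    rcases Fin.eq_castSucc_or_eq_last y with ⟨y', rfl⟩ | rfl
    · rcases Fin.eq_castSucc_or_eq_last x with ⟨x', rfl⟩ | rfl
      · have hxy2 : x' < y' := by simpa using hxy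
        simpa using hc hxy2
      · exact absurd hxy (by simp [Fin.lt_def, Fin.last])
    · rcases Fin.eq_castSucc_or_eq_last x with ⟨x', rfl⟩ | rfl
      · simpa using lt_of_le_of_lt (hcle x') hkm
      · exact absurd hxy (lt_irrefl _)
  · intro j
    rcases Fin.eq_castSucc_or_eq_last j with ⟨j', rfl⟩ | rfl
    · have h2 : (Fin.castSucc j').succ = (j'.succ).castSucc := by ext; simp
      rw [show (Fin.castSucc j').castSucc = (j'.castSucc).castSucc from rfl, h2,
        Fin.snoc_castSucc, Fin.snoc_castSucc]
      exact hadjs j'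
    · have h2 : (Fin.last p).succ = Fin.last (p + 1) := by ext; simp
      rw [show (Fin.last p).castSucc = Fin.castSucc (Fin.last p) from rfl, h2,
        Fin.snoc_castSucc, Fin.snoc_last, hlast]
      exact hadj

theorem ell_lt_of_adj {k m : Fin d} (hkm : k < m) (hadj : G.Adj (a k) (a m)) :
    ell G a k < ell G a m :=
  lt_of_lt_of_le (Nat.lt_succ_self _)
    (le_ell (ellSpec_succ_of_adj hkm hadj (ellSpec_ell k)))

theorem exists_of_ellSpec_succ {q : Fin d} {p : ℕ} (h : ellSpec G a q (p + 1)) :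
    ∃ i : Fin d, i < q ∧ G.Adj (a i) (a q) ∧ p ≤ ell G a i := by
  obtain ⟨c, hc, hlast, hadjs⟩ := h
  set i : Fin d := c (Fin.castSucc (Fin.last p)) with hi
  have hiq : i < q := by
    rw [← hlast]
    exact hc (by simp [Fin.lt_def, Fin.last])
  have hadj : G.Adj (a i) (a q) := by
    have := hadjs (Fin.last p)
    rwa [show (Fin.last p).succ = Fin.last (p + 1) by ext; simp, hlast] at this
  refine ⟨i, hiq, hadj, ?_⟩
  have hspec : ellSpec G a i p := by
    refine ⟨fun t => c (Fin.castLE (by omega) t), fun x y hxy => hc (by simpa using hxy), ?_, ?_⟩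
    · rw [hi]; congr 1
    · intro j
      have := hadjs (Fin.castLE (by omega) j : Fin (p + 1))
      convert this using 3 <;> ext <;> simp
  exact le_ell hspec

theorem exists_of_ell_pos {q : Fin d} (h : 0 < ell G a q) :
    ∃ i : Fin d, i < q ∧ G.Adj (a i) (a q) ∧ ell G a q ≤ ell G a i + 1 := by
  have hs := ellSpec_ell (G := G) (a := a) q
  rw [show ell G a q = (ell G a q - 1) + 1 by omega] at hs
  obtain ⟨i, h1, h2, h3⟩ := exists_of_ellSpec_succ hs
  exact ⟨i, h1, h2, by omega⟩

theorem ell_congr {a' : Equiv.Perm (Fin d)} {p : Fin d}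
    (h : ∀ q : Fin d, q ≤ p → a q = a' q) : ell G a p = ell G a' p := by
  have key : ∀ (b b' : Equiv.Perm (Fin d)), (∀ q : Fin d, q ≤ p → b q = b' q) →
      ∀ {x}, ellSpec G b p x → ellSpec G b' p x := by
    rintro b b' hbb' x ⟨c, hc, hlast, hadjs⟩
    have hcle : ∀ i, c i ≤ p := fun i => hlast ▸ hc.monotone (Fin.le_last i)
    exact ⟨c, hc, hlast, fun j => by
      rw [← hbb' _ (hcle _), ← hbb' _ (hcle _)]; exact hadjs j⟩
  have h' : ∀ q : Fin d, q ≤ p → a' q = a q := fun q hq => (h q hq).symm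
  exact le_antisymm (le_ell (key a a' h (ellSpec_ell p))) (le_ell (key a' a h' (ellSpec_ell p)))

end ChromAux

namespace ChromAux

variable {d : ℕ} {G : SimpleGraph (Fin d)} {a : Equiv.Perm (Fin d)}

theorem chain_trans {r : Fin d → Fin d → Prop}
    (ht : ∀ x y z : Fin d, r x y → r y z → r x z) :
    ∀ (n : ℕ) (k m : Fin d), (m : ℕ) = (k : ℕ) + n + 1 →
      (∀ i j : Fin d, (k : ℕ) ≤ (i : ℕ) → (i : ℕ) + 1 = (j : ℕ) → (j : ℕ) ≤ (m : ℕ) → r i j) →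
      r k m := by
  intro n
  induction n with
  | zero => exact fun k m hm h => h k m le_rfl (by omega) (by omega)
  | succ n ih =>
    intro k m hm h
    have hm' : (k : ℕ) + n + 1 < d := by have := m.isLt; omega
    set m' : Fin d := ⟨(k : ℕ) + n + 1, hm'⟩ with hm'd
    have h1 : r k m' := ih k m' rfl (fun i j hi hij hj => h i j hi hij (by simp [hm'd] at hj ⊢; omega))
    have h2 : r m' m := h m' m (by simp [hm'd]; omega) (by simp [hm'd]; omega) le_rfl
    exact ht _ _ _ h1 h2

/-- Transfer of `ellSpec` along an adjacent transposition of non-adjacent occupants. -/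
theorem ellSpec_swap {u w k : Fin d} {p : ℕ} (huw : (u : ℕ) + 1 = (w : ℕ))
    (hna : ¬ G.Adj (a u) (a w)) (h : ellSpec G a k p) :
    ellSpec G (a * Equiv.swap u w) (Equiv.swap u w k) p := by
  obtain ⟨c, hc, hlast, hadjs⟩ := h
  set s := Equiv.swap u w with hs
  have huw' : u < w := Fin.lt_def.mpr (by omega)
  -- c cannot contain both u and w
  have hnot : ¬ (∃ j1, c j1 = u) ∨ ¬ (∃ j2, c j2 = w) := by
    by_contra hcon
    push_neg at hcon
    obtain ⟨⟨j1, hj1⟩, ⟨j2, hj2⟩⟩ := hcon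
    have hj12 : j1 < j2 := by
      have : c j1 < c j2 := by rw [hj1, hj2]; exact huw'
      exact hc.lt_iff_lt.mp this
    have hj2v : (j2 : ℕ) = (j1 : ℕ) + 1 := by
      by_contra hne
      have hmidlt : (j1 : ℕ) + 1 < p + 1 := by have := j2.isLt; omega
      set jm : Fin (p + 1) := ⟨(j1 : ℕ) + 1, hmidlt⟩ with hjm
      have h1 : c j1 < c jm := hc (Fin.lt_def.mpr (by rw [hjm]; simp))
      have h2 : c jm < c j2 := hc (Fin.lt_def.mpr (by rw [hjm]; simp; have := Fin.lt_def.mp hj12; omega))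
      have hv1 : (c j1 : ℕ) < (c jm : ℕ) := Fin.lt_def.mp h1
      have hv2 : (c jm : ℕ) < (c j2 : ℕ) := Fin.lt_def.mp h2
      rw [hj1] at hv1
      rw [hj2] at hv2
      omega
    have hj1p : (j1 : ℕ) < p := by have := j2.isLt; omega
    have := hadjs ⟨(j1 : ℕ), hj1p⟩
    have e1 : (⟨(j1 : ℕ), hj1p⟩ : Fin p).castSucc = j1 := by ext; simp
    have e2 : (⟨(j1 : ℕ), hj1p⟩ : Fin p).succ = j2 := by ext; simp; omega
    rw [e1, e2, hj1, hj2] at this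
    exact hna this
  have neOf : ∀ z t : Fin d, (z : ℕ) ≠ (t : ℕ) → z ≠ t :=
    fun z t h hh => h (congrArg Fin.val hh)
  have hsval : ∀ z : Fin d, z ≠ u → z ≠ w → s z = z :=
    fun z h1 h2 => Equiv.swap_apply_of_ne_of_ne h1 h2
  have hkey : ∀ x y : Fin d, x < y → (∃ j, c j = x) → (∃ j, c j = y) → s x < s y := by
    intro x y hxy hx hy
    have hvxy : (x : ℕ) < (y : ℕ) := Fin.lt_def.mp hxy
    by_cases hxu : x = u
    · have hvxu : (x : ℕ) = (u : ℕ) := congrArg Fin.val hxu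
      have hyw : y ≠ w := by
        intro hyw
        rcases hnot with h1 | h2
        · exact h1 (hxu ▸ hx)
        · exact h2 (hyw ▸ hy)
      have hvyw : (y : ℕ) ≠ (w : ℕ) := fun hh => hyw (Fin.ext hh)
      have hyu : y ≠ u := neOf _ _ (by omega)
      have e1 : s x = w := by rw [hxu]; exact Equiv.swap_apply_left u w
      rw [e1, hsval y hyu hyw]
      exact Fin.lt_def.mpr (by omega)
    by_cases hxw : x = w
    · have hvxw : (x : ℕ) = (w : ℕ) := congrArg Fin.val hxw
      have hyu : y ≠ u := neOf _ _ (by omega)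
      have hyw : y ≠ w := neOf _ _ (by omega)
      have e1 : s x = u := by rw [hxw]; exact Equiv.swap_apply_right u w
      rw [e1, hsval y hyu hyw]
      exact Fin.lt_def.mpr (by omega)
    by_cases hyu : y = u
    · have hvyu : (y : ℕ) = (u : ℕ) := congrArg Fin.val hyu
      have e2 : s y = w := by rw [hyu]; exact Equiv.swap_apply_left u w
      rw [e2, hsval x hxu hxw]
      exact Fin.lt_def.mpr (by omega)
    by_cases hyw : y = w
    · have hvyw : (y : ℕ) = (w : ℕ) := congrArg Fin.val hyw
      have hxuv : (x : ℕ) ≠ (u : ℕ) := fun hh => hxu (Fin.ext hh)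
      have e2 : s y = u := by rw [hyw]; exact Equiv.swap_apply_right u w
      rw [e2, hsval x hxu hxw]
      exact Fin.lt_def.mpr (by omega)
    · rw [hsval x hxu hxw, hsval y hyu hyw]
      exact hxy
  refine ⟨s ∘ c, ?_, ?_, ?_⟩
  · intro x y hxy
    exact hkey (c x) (c y) (hc hxy) ⟨x, rfl⟩ ⟨y, rfl⟩
  · simp [hlast]
  · intro j
    have : ∀ z, (a * s) (s z) = a z := by
      intro z; simp [hs, Equiv.Perm.mul_apply]
    simp only [Function.comp_apply, this]
    exact hadjs j

theorem ell_mul_swap {u w : Fin d} (huw : (u : ℕ) + 1 = (w : ℕ))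
    (hna : ¬ G.Adj (a u) (a w)) (k : Fin d) :
    ell G (a * Equiv.swap u w) k = ell G a (Equiv.swap u w k) := by
  set s := Equiv.swap u w with hs
  have hinv : a * s * s = a := by
    rw [mul_assoc, Equiv.swap_mul_self, mul_one]
  have hna' : ¬ G.Adj ((a * s) u) ((a * s) w) := by
    simp only [Equiv.Perm.mul_apply, hs, Equiv.swap_apply_left, Equiv.swap_apply_right]
    exact fun hh => hna hh.symm
  have hset : {p | ellSpec G (a * s) k p} = {p | ellSpec G a (s k) p} := by
    ext p
    constructor
    · intro hp
      have := ellSpec_swap (a := a * s) huw hna' hp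
      rwa [hinv] at this
    · intro hp
      have := ellSpec_swap (a := a) huw hna hp
      rwa [Equiv.swap_apply_self] at this
  unfold ell
  rw [hset]

end ChromAux

namespace ChromAux

/-- Lex comparison of the key `(ℓ(i), a i)`. -/
def CutRel {d : ℕ} (G : SimpleGraph (Fin d)) (a : Equiv.Perm (Fin d)) (i j : Fin d) : Prop :=
  ell G a i < ell G a j ∨ (ell G a i = ell G a j ∧ a i < a j)

variable {d : ℕ} {G : SimpleGraph (Fin d)} {a : Equiv.Perm (Fin d)}

theorem cutRel_trans {i j k : Fin d} (h1 : CutRel G a i j) (h2 : CutRel G a j k) :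
    CutRel G a i k := by
  rcases h1 with h1 | ⟨h1, h1'⟩ <;> rcases h2 with h2 | ⟨h2, h2'⟩
  · exact Or.inl (lt_trans h1 h2)
  · exact Or.inl (h2 ▸ h1)
  · exact Or.inl (h1 ▸ h2)
  · exact Or.inr ⟨h1.trans h2, lt_trans h1' h2'⟩

theorem cutRel_asymm {i j : Fin d} (h1 : CutRel G a i j) : ¬ CutRel G a j i := by
  rintro (h2 | ⟨h2, h2'⟩) <;> rcases h1 with h1 | ⟨h1, h1'⟩
  · omega
  · omega
  · omega
  · exact absurd (lt_trans h1' h2') (lt_irrefl _)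

theorem cutRel_total {i j : Fin d} (hij : i ≠ j) : CutRel G a i j ∨ CutRel G a j i := by
  rcases lt_trichotomy (ell G a i) (ell G a j) with h | h | h
  · exact Or.inl (Or.inl h)
  · rcases lt_trichotomy (a i) (a j) with h' | h' | h'
    · exact Or.inl (Or.inr ⟨h, h'⟩)
    · exact absurd (a.injective h') hij
    · exact Or.inr (Or.inr ⟨h.symm, h'⟩)
  · exact Or.inr (Or.inl h)

theorem isCut_iff {i j : Fin d} (hij : (i : ℕ) + 1 = (j : ℕ)) :
    IsCut G a j ↔ CutRel G a i j := by
  constructor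
  · rintro (h0 | ⟨i', hi', h⟩)
    · omega
    · have : i' = i := Fin.ext (by omega)
      rwa [this] at h
  · intro h
    exact Or.inr ⟨i, hij, h⟩

theorem isCut_zero {j : Fin d} (hj : (j : ℕ) = 0) : IsCut G a j := Or.inl hj

theorem chain_trans' {r : Fin d → Fin d → Prop}
    (ht : ∀ x y z : Fin d, r x y → r y z → r x z) {k m : Fin d} (hkm : k < m)
    (h : ∀ i j : Fin d, (k : ℕ) ≤ (i : ℕ) → (i : ℕ) + 1 = (j : ℕ) → (j : ℕ) ≤ (m : ℕ) → r i j) :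
    r k m := by
  have hn : (m : ℕ) = (k : ℕ) + ((m : ℕ) - (k : ℕ) - 1) + 1 := by
    have := Fin.lt_def.mp hkm; omega
  exact chain_trans ht _ k m hn h

/-- The structure condition on `(a, b)`: `b` is monotone and strictly increases at cuts. -/
def Good {d n : ℕ} (G : SimpleGraph (Fin d)) (a : Equiv.Perm (Fin d))
    (b : Fin d → Fin n) : Prop :=
  Monotone b ∧ ∀ i j : Fin d, (i : ℕ) + 1 = (j : ℕ) → IsCut G a j → b i < b j

theorem good_strict {n : ℕ} {b : Fin d → Fin n} (hb : Good G a b) {k m : Fin d}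
    (hkm : k < m) (hadj : G.Adj (a k) (a m)) : b k < b m := by
  by_contra hcon
  have hbm : b m ≤ b k := not_lt.mp hcon
  have hbkm : b k = b m := le_antisymm (hb.1 hkm.le) hbm
  have hell : ell G a k < ell G a m := ell_lt_of_adj hkm hadj
  have hchain : ell G a m ≤ ell G a k := by
    refine chain_trans' (r := fun x y => ell G a y ≤ ell G a x)
      (fun x y z h1 h2 => le_trans h2 h1) hkm ?_
    intro i j hki hij hjm
    by_contra hlt
    have hcut : IsCut G a j := (isCut_iff hij).mpr (Or.inl (not_le.mp hlt))
    have hbij : b i < b j := hb.2 i j hij hcut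
    have h1 : b k ≤ b i := hb.1 (Fin.le_def.mpr (by have := Fin.lt_def.mp hkm; omega))
    have h2 : b j ≤ b m := hb.1 (Fin.le_def.mpr hjm)
    rw [hbkm] at h1
    exact absurd (lt_of_le_of_lt h1 (lt_of_lt_of_le hbij h2)) (lt_irrefl _)
  omega

/-- Within a block of constant `b`-value, consecutive keys strictly descend;
hence the key at the end is smaller than at the start. -/
theorem block_cutRel {n : ℕ} {b : Fin d → Fin n} (hb : Good G a b) {j q : Fin d}
    (hjq : j < q) (hbeq : b j = b q) : CutRel G a q j := by
  refine chain_trans' (r := fun x y => CutRel G a y x)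
    (fun x y z h1 h2 => cutRel_trans h2 h1) hjq ?_
  intro x y hjx hxy hyq
  have hxq : b x ≤ b q := hb.1 (Fin.le_def.mpr (by omega))
  have hyq' : b y ≤ b q := hb.1 (Fin.le_def.mpr hyq)
  have hbx : b j = b x := le_antisymm (hb.1 (Fin.le_def.mpr hjx)) (hbeq ▸ hxq)
  have hby : b j = b y := le_antisymm (hb.1 (Fin.le_def.mpr (by omega))) (hbeq ▸ hyq')
  have hnc : ¬ IsCut G a y := by
    intro hcut
    have := hb.2 x y hxy hcut
    rw [← hbx, ← hby] at this
    exact lt_irrefl _ this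
  have hne : x ≠ y := fun hh => by rw [hh] at hxy; omega
  rcases cutRel_total (G := G) (a := a) hne with h | h
  · exact (hnc ((isCut_iff hxy).mpr h)).elim
  · exact h

end ChromAux

namespace ChromAux

variable {d : ℕ} {G : SimpleGraph (Fin d)} {a : Equiv.Perm (Fin d)}

theorem strictMono_of_succ {f : Fin d → ℕ}
    (h : ∀ i j : Fin d, (i : ℕ) + 1 = (j : ℕ) → f i < f j) : StrictMono f := by
  intro x y hxy
  exact chain_trans' (r := fun p q => f p < f q) (fun _ _ _ h1 h2 => lt_trans h1 h2) hxy
    (fun i j _ hij _ => h i j hij)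

theorem monotone_of_succ {f : Fin d → ℕ}
    (h : ∀ i j : Fin d, (i : ℕ) + 1 = (j : ℕ) → f i ≤ f j) : Monotone f := by
  intro x y hxy
  rcases eq_or_lt_of_le hxy with rfl | hlt
  · exact le_rfl
  · exact chain_trans' (r := fun p q => f p ≤ f q) (fun _ _ _ h1 h2 => le_trans h1 h2) hlt
      (fun i j _ hij _ => h i j hij)

theorem card_strictMono (k m : ℕ) :
    Nat.card {g : Fin k → Fin m // StrictMono g} = m.choose k := by
  classical
  have e : {g : Fin k → Fin m // StrictMono g} ≃ {s : Finset (Fin m) // s.card = k} :=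
    { toFun := fun g => ⟨Finset.univ.image g.1, by
        rw [Finset.card_image_of_injective _ g.2.injective, Finset.card_univ, Fintype.card_fin]⟩
      invFun := fun s => ⟨s.1.orderEmbOfFin s.2, (s.1.orderEmbOfFin s.2).strictMono⟩
      left_inv := fun g => Subtype.ext
        ((Finset.orderEmbOfFin_unique _
          (fun x => Finset.mem_image_of_mem _ (Finset.mem_univ x)) g.2).symm)
      right_inv := fun s => Subtype.ext (by
        apply Finset.coe_injective
        rw [Finset.coe_image, Finset.coe_univ, Set.image_univ, Finset.range_orderEmbOfFin]) }
  rw [Nat.card_congr e, Nat.card_eq_fintype_card, Fintype.card_subtype]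
  have hfil : Finset.univ.filter (fun s : Finset (Fin m) => s.card = k)
      = Finset.powersetCard k Finset.univ := by
    ext s
    simp [Finset.mem_powersetCard]
  rw [hfil, Finset.card_powersetCard, Finset.card_univ, Fintype.card_fin]

theorem card_good (hd : 1 ≤ d) (n : ℕ) (a : Equiv.Perm (Fin d)) :
    Nat.card {b : Fin d → Fin n // Good G a b} = (n + d - numCuts G a).choose d := by
  classical
  set C : Finset (Fin d) := Finset.univ.filter (fun j => IsCut G a j) with hC
  have hcnum : numCuts G a = C.card := by
    rw [numCuts, Nat.card_eq_fintype_card, Fintype.card_subtype]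
  have h0mem : (⟨0, hd⟩ : Fin d) ∈ C := by
    rw [hC, Finset.mem_filter]
    exact ⟨Finset.mem_univ _, isCut_zero rfl⟩
  have hc1 : 1 ≤ C.card := Finset.card_pos.mpr ⟨_, h0mem⟩
  have hcd : C.card ≤ d := le_trans (Finset.card_le_card (Finset.filter_subset _ _))
    (by rw [Finset.card_univ, Fintype.card_fin])
  set c := C.card with hc
  set e : Fin d → ℕ := fun k =>
    (Finset.univ.filter (fun q => ¬ IsCut G a q ∧ q ≤ k)).card with he
  have he_mono : ∀ k k' : Fin d, k ≤ k' → e k ≤ e k' := by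
    intro k k' hkk
    apply Finset.card_le_card
    intro q hq
    rw [Finset.mem_filter] at hq ⊢
    exact ⟨hq.1, hq.2.1, le_trans hq.2.2 hkk⟩
  have he_succ_cut : ∀ i j : Fin d, (i : ℕ) + 1 = (j : ℕ) → IsCut G a j → e j = e i := by
    intro i j hij hcut
    show (Finset.univ.filter (fun q => ¬ IsCut G a q ∧ q ≤ j)).card
      = (Finset.univ.filter (fun q => ¬ IsCut G a q ∧ q ≤ i)).card
    congr 1
    ext q
    simp only [Finset.mem_filter, Finset.mem_univ, true_and]
    constructor
    · rintro ⟨h1, h2⟩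
      refine ⟨h1, Fin.le_def.mpr ?_⟩
      have hv := Fin.le_def.mp h2
      have hqj : q ≠ j := fun hh => h1 (hh ▸ hcut)
      have : (q : ℕ) ≠ (j : ℕ) := fun hh => hqj (Fin.ext hh)
      omega
    · rintro ⟨h1, h2⟩
      exact ⟨h1, Fin.le_def.mpr (by have := Fin.le_def.mp h2; omega)⟩
  have he_succ_non : ∀ i j : Fin d, (i : ℕ) + 1 = (j : ℕ) → ¬ IsCut G a j → e j = e i + 1 := by
    intro i j hij hnc
    show (Finset.univ.filter (fun q => ¬ IsCut G a q ∧ q ≤ j)).card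
      = (Finset.univ.filter (fun q => ¬ IsCut G a q ∧ q ≤ i)).card + 1
    have hset : Finset.univ.filter (fun q => ¬ IsCut G a q ∧ q ≤ j)
        = insert j (Finset.univ.filter (fun q => ¬ IsCut G a q ∧ q ≤ i)) := by
      ext q
      simp only [Finset.mem_filter, Finset.mem_univ, true_and, Finset.mem_insert]
      constructor
      · rintro ⟨h1, h2⟩
        rcases eq_or_ne q j with rfl | hqj
        · exact Or.inl rfl
        · refine Or.inr ⟨h1, Fin.le_def.mpr ?_⟩
          have hv := Fin.le_def.mp h2
          have : (q : ℕ) ≠ (j : ℕ) := fun hh => hqj (Fin.ext hh)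
          omega
      · rintro (rfl | ⟨h1, h2⟩)
        · exact ⟨hnc, le_rfl⟩
        · exact ⟨h1, Fin.le_def.mpr (by have := Fin.le_def.mp h2; omega)⟩
    rw [hset, Finset.card_insert_of_notMem]
    simp only [Finset.mem_filter, Finset.mem_univ, true_and, not_and]
    intro _ hle
    have := Fin.le_def.mp hle
    omega
  have he_le : ∀ (v : ℕ) (k : Fin d), (k : ℕ) = v → e k ≤ v := by
    intro v
    induction v with
    | zero =>
      intro k hk
      have hemp : Finset.univ.filter (fun q => ¬ IsCut G a q ∧ q ≤ k) = ∅ := by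
        ext q
        simp only [Finset.mem_filter, Finset.mem_univ, true_and, Finset.notMem_empty,
          iff_false, not_and]
        intro h1 h2
        have := Fin.le_def.mp h2
        exact h1 (isCut_zero (by omega))
      show (Finset.univ.filter (fun q => ¬ IsCut G a q ∧ q ≤ k)).card ≤ 0
      rw [hemp, Finset.card_empty]
    | succ v ih =>
      intro k hk
      set i : Fin d := ⟨v, by omega⟩ with hi
      have hik : (i : ℕ) + 1 = (k : ℕ) := by rw [hi]; simp; omega
      have hei : e i ≤ v := ih i (by rw [hi])
      by_cases hcut : IsCut G a k
      · rw [he_succ_cut i k hik hcut]; omega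
      · rw [he_succ_non i k hik hcut]; omega
  have hlastd : d - 1 < d := by omega
  set lastd : Fin d := ⟨d - 1, hlastd⟩ with hlast
  have he_last : e lastd = d - c := by
    have hflt : Finset.univ.filter (fun q => ¬ IsCut G a q ∧ q ≤ lastd)
        = Finset.univ.filter (fun q => ¬ IsCut G a q) := by
      ext q
      simp only [Finset.mem_filter, Finset.mem_univ, true_and, and_iff_left_iff_imp]
      intro _
      exact Fin.le_def.mpr (by rw [hlast]; simp; have := q.isLt; omega)
    have hsum := Finset.card_filter_add_card_filter_not
      (s := (Finset.univ : Finset (Fin d))) (p := fun j => IsCut G a j)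
    rw [Finset.card_univ, Fintype.card_fin] at hsum
    show (Finset.univ.filter (fun q => ¬ IsCut G a q ∧ q ≤ lastd)).card = d - c
    rw [hflt]
    have hCc : c + (Finset.univ.filter (fun q => ¬ IsCut G a q)).card = d := by
      rw [hc, hC]
      convert hsum using 2
    omega
  have he_le_dc : ∀ k, e k ≤ d - c := by
    intro k
    have hkl : k ≤ lastd := Fin.le_def.mpr (by rw [hlast]; simp; have := k.isLt; omega)
    exact le_trans (he_mono k lastd hkl) (le_of_eq he_last)
  set m := n + (d - c) with hm
  -- gap estimates for a strictly monotone g and for e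
  have hgap_g : ∀ (g : Fin d → Fin m), StrictMono g → ∀ k k' : Fin d, k ≤ k' →
      (g k : ℕ) + ((k' : ℕ) - (k : ℕ)) ≤ (g k' : ℕ) := by
    intro g hg k k' hkk
    rcases eq_or_lt_of_le hkk with rfl | hlt
    · simp
    · refine chain_trans'
        (r := fun p q => (p : ℕ) ≤ (q : ℕ) ∧ (g p : ℕ) + ((q : ℕ) - (p : ℕ)) ≤ (g q : ℕ))
        (fun x y z hxy hyz => by omega) hlt ?_ |>.2
      intro i j _ hij _
      have := Fin.lt_def.mp (hg (Fin.lt_def.mpr (by omega : (i : ℕ) < (j : ℕ))))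
      omega
  have hgap_e : ∀ k k' : Fin d, k ≤ k' → e k' ≤ e k + ((k' : ℕ) - (k : ℕ)) := by
    intro k k' hkk
    rcases eq_or_lt_of_le hkk with rfl | hlt
    · simp
    · refine chain_trans'
        (r := fun p q => (p : ℕ) ≤ (q : ℕ) ∧ e q ≤ e p + ((q : ℕ) - (p : ℕ)))
        (fun x y z hxy hyz => by omega) hlt ?_ |>.2
      intro i j _ hij _
      by_cases hcut : IsCut G a j
      · rw [he_succ_cut i j hij hcut]; omega
      · rw [he_succ_non i j hij hcut]; omega
  have key : Nat.card {b : Fin d → Fin n // Good G a b}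
      = Nat.card {g : Fin d → Fin m // StrictMono g} := by
    apply Nat.card_congr
    refine
      { toFun := fun b => ⟨fun k => ⟨(b.1 k : ℕ) + e k, by
          have h1 := (b.1 k).isLt
          have h2 := he_le_dc k
          omega⟩, by
          have hf : StrictMono (fun k : Fin d => (b.1 k : ℕ) + e k) := by
            apply strictMono_of_succ
            intro i j hij
            by_cases hcut : IsCut G a j
            · have h1 := Fin.lt_def.mp (b.2.2 i j hij hcut)
              have h2 := he_mono i j (Fin.le_def.mpr (by omega))
              omega
            · have h1 := Fin.le_def.mp (b.2.1 (Fin.le_def.mpr (by omega : (i : ℕ) ≤ (j : ℕ))))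
              have h2 := he_succ_non i j hij hcut
              omega
          intro x y hxy
          exact Fin.mk_lt_mk.mpr (hf hxy)⟩
        invFun := fun g => ⟨fun k => ⟨(g.1 k : ℕ) - e k, by
          have hkl : k ≤ lastd := Fin.le_def.mpr (by rw [hlast]; simp; have := k.isLt; omega)
          have h3 := hgap_g g.1 g.2 k lastd hkl
          have h4 := hgap_e k lastd hkl
          have h5 := (g.1 lastd).isLt
          have h6 := sm_val_le g.2 lastd
          have h7 : (lastd : ℕ) = d - 1 := by rw [hlast]
          rw [he_last] at h4
          omega⟩, by
          constructor
          · have hmono : Monotone (fun k : Fin d => (g.1 k : ℕ) - e k) := by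
              apply monotone_of_succ
              intro i j hij
              have h1 := Fin.lt_def.mp (g.2 (Fin.lt_def.mpr (by omega : (i : ℕ) < (j : ℕ))))
              by_cases hcut : IsCut G a j
              · rw [he_succ_cut i j hij hcut]; omega
              · rw [he_succ_non i j hij hcut]; omega
            intro x y hxy
            exact Fin.mk_le_mk.mpr (hmono hxy)
          · intro i j hij hcut
            have h1 := Fin.lt_def.mp (g.2 (Fin.lt_def.mpr (by omega : (i : ℕ) < (j : ℕ))))
            have h2 : e i ≤ (g.1 i : ℕ) := le_trans (he_le (i : ℕ) i rfl) (sm_val_le g.2 i)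
            have h3 := he_succ_cut i j hij hcut
            exact Fin.mk_lt_mk.mpr (by omega)⟩
        left_inv := by
          intro b
          apply Subtype.ext
          funext k
          apply Fin.ext
          simp
        right_inv := by
          intro g
          apply Subtype.ext
          funext k
          apply Fin.ext
          have h1 := he_le (k : ℕ) k rfl
          have h2 := sm_val_le g.2 k
          simp
          omega }
  rw [key, card_strictMono]
  have hmc : m = n + d - numCuts G a := by rw [hcnum]; omega
  rw [hmc]

end ChromAux

namespace ChromAux

variable {d : ℕ} {G : SimpleGraph (Fin d)} {a : Equiv.Perm (Fin d)}

theorem forward_proper {n : ℕ} {b : Fin d → Fin n} (hb : Good G a b) :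
    ∀ u v : Fin d, G.Adj u v → b (a⁻¹ u) ≠ b (a⁻¹ v) := by
  intro u v hadj heq
  have hu : a (a⁻¹ u) = u := a.apply_symm_apply u
  have hv : a (a⁻¹ v) = v := a.apply_symm_apply v
  have hne : a⁻¹ u ≠ a⁻¹ v := by
    intro hh
    exact G.ne_of_adj hadj (by rw [← hu, ← hv, hh])
  rcases lt_or_gt_of_ne hne with hlt | hgt
  · exact absurd heq (ne_of_lt (good_strict hb hlt (by rw [hu, hv]; exact hadj)))
  · exact absurd heq.symm (ne_of_lt (good_strict hb hgt (by rw [hu, hv]; exact hadj.symm)))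

/-- `Nval G a j v`: one plus the length of the longest path ending at a position `< j`
whose occupant is adjacent to `v` (0 if there is none). -/
noncomputable def Nval (G : SimpleGraph (Fin d)) (a : Equiv.Perm (Fin d)) (j v : Fin d) : ℕ :=
  sSup {x : ℕ | ∃ p : Fin d, p < j ∧ G.Adj (a p) v ∧ x = ell G a p + 1}

theorem Nval_bdd {j v : Fin d} :
    BddAbove {x : ℕ | ∃ p : Fin d, p < j ∧ G.Adj (a p) v ∧ x = ell G a p + 1} := by
  refine ⟨d, ?_⟩
  rintro x ⟨p, -, -, rfl⟩
  exact ellSpec_lt (ellSpec_ell p)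

theorem le_Nval {j v : Fin d} {p : Fin d} (hpj : p < j) (hadj : G.Adj (a p) v) :
    ell G a p + 1 ≤ Nval G a j v :=
  le_csSup Nval_bdd ⟨p, hpj, hadj, rfl⟩

theorem Nval_le {j v : Fin d} {x : ℕ}
    (h : ∀ p : Fin d, p < j → G.Adj (a p) v → ell G a p + 1 ≤ x) : Nval G a j v ≤ x := by
  apply csSup_le'
  rintro y ⟨p, hpj, hadj, rfl⟩
  exact h p hpj hadj

theorem ell_eq_Nval {n : ℕ} {b : Fin d → Fin n} (hb : Good G a b) {j t : Fin d}
    (hjt : j ≤ t) (hbt : b j = b t) : ell G a t = Nval G a j (a t) := by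
  apply le_antisymm
  · by_cases h0 : ell G a t = 0
    · rw [h0]; exact Nat.zero_le _
    · obtain ⟨i, hit, hadj, hle⟩ := exists_of_ell_pos (Nat.pos_of_ne_zero h0)
      have hij : i < j := by
        by_contra hge
        push_neg at hge
        have hbi : b i = b t := le_antisymm (hb.1 hit.le) (hbt ▸ hb.1 hge)
        exact absurd (good_strict hb hit hadj) (by rw [hbi]; exact lt_irrefl _)
      exact le_trans hle (le_Nval hij hadj)
  · exact Nval_le (fun p hpj hadj =>
      Nat.succ_le_of_lt (ell_lt_of_adj (lt_of_lt_of_le hpj hjt) hadj))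

theorem Nval_congr {a' : Equiv.Perm (Fin d)} {j v : Fin d}
    (h : ∀ p : Fin d, p < j → a p = a' p) : Nval G a j v = Nval G a' j v := by
  have hset : {x : ℕ | ∃ p : Fin d, p < j ∧ G.Adj (a p) v ∧ x = ell G a p + 1}
      = {x : ℕ | ∃ p : Fin d, p < j ∧ G.Adj (a' p) v ∧ x = ell G a' p + 1} := by
    ext x
    constructor
    · rintro ⟨p, hpj, hadj, rfl⟩
      exact ⟨p, hpj, h p hpj ▸ hadj,
        by rw [ell_congr (fun q hq => h q (lt_of_le_of_lt hq hpj))]⟩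
    · rintro ⟨p, hpj, hadj, rfl⟩
      exact ⟨p, hpj, (h p hpj).symm ▸ hadj,
        by rw [ell_congr (fun q hq => h q (lt_of_le_of_lt hq hpj))]⟩
  unfold Nval
  rw [hset]

theorem perm_unique {n : ℕ} {a a' : Equiv.Perm (Fin d)} {b b' : Fin d → Fin n}
    (hb : Good G a b) (hb' : Good G a' b')
    (hφ : ∀ v : Fin d, b (a⁻¹ v) = b' (a'⁻¹ v)) : a = a' := by
  have step : ∀ j : Fin d, (∀ p : Fin d, p < j → a p = a' p) → a j = a' j := by
    intro j hprev
    by_cases heq : a j = a' j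
    · exact heq
    have hq_ge' : ∀ w : Fin d, (∀ p : Fin d, p < j → a p ≠ w) → j ≤ a'⁻¹ w := by
      intro w hw
      by_contra hcon
      push_neg at hcon
      exact hw _ hcon (by rw [hprev _ hcon]; exact a'.apply_symm_apply w)
    have hq_ge2 : ∀ w : Fin d, (∀ p : Fin d, p < j → a' p ≠ w) → j ≤ a⁻¹ w := by
      intro w hw
      by_contra hcon
      push_neg at hcon
      exact hw _ hcon (by rw [← hprev _ hcon]; exact a.apply_symm_apply w)
    obtain ⟨q, hqdef⟩ : ∃ q : Fin d, q = a⁻¹ (a' j) := ⟨_, rfl⟩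
    have haq : a q = a' j := by rw [hqdef]; exact a.apply_symm_apply _
    have hq_j : j ≤ q := by
      rw [hqdef]
      apply hq_ge2
      intro p hp hh
      exact absurd (a'.injective hh) (ne_of_lt hp)
    have hqj : j < q := by
      rcases eq_or_lt_of_le hq_j with hje | h
      · exact absurd ((congrArg a hje).trans haq) heq
      · exact h
    obtain ⟨p', hpdef⟩ : ∃ p' : Fin d, p' = a'⁻¹ (a j) := ⟨_, rfl⟩
    have hap : a' p' = a j := by rw [hpdef]; exact a'.apply_symm_apply _
    have hp_j : j ≤ p' := by
      rw [hpdef]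
      apply hq_ge'
      intro p hp hh
      exact absurd (a.injective hh) (ne_of_lt hp)
    have hpj : j < p' := by
      rcases eq_or_lt_of_le hp_j with hje | h
      · exact absurd ((congrArg a' hje).trans hap).symm heq
      · exact h
    have e1 : b q = b' j := by rw [hqdef, hφ (a' j), show a'⁻¹ (a' j) = j from a'.symm_apply_apply j]
    have e2 : b' p' = b j := by rw [hpdef, ← hφ (a j), show a⁻¹ (a j) = j from a.symm_apply_apply j]
    have hbj : b j = b' j := by
      have h1 : b j ≤ b q := hb.1 hq_j
      have h2 : b' j ≤ b' p' := hb'.1 hp_j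
      rw [e1] at h1
      rw [e2] at h2
      exact le_antisymm h1 h2
    have hbq : b j = b q := by rw [e1, hbj]
    have hbp : b' j = b' p' := by rw [e2, hbj]
    have h1 : CutRel G a q j := block_cutRel hb hqj hbq
    have h2 : CutRel G a' p' j := block_cutRel hb' hpj hbp
    have hN : ∀ v, Nval G a j v = Nval G a' j v := fun v => Nval_congr hprev
    have E1 : ell G a q = Nval G a' j (a' j) := by
      rw [ell_eq_Nval hb hqj.le hbq, haq, hN]
    have E2 : ell G a j = Nval G a' j (a j) := by
      rw [ell_eq_Nval hb le_rfl rfl, hN]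
    have E3 : ell G a' p' = Nval G a' j (a j) := by
      rw [ell_eq_Nval hb' hpj.le hbp, hap]
    have E4 : ell G a' j = Nval G a' j (a' j) := ell_eq_Nval hb' le_rfl rfl
    rcases h1 with h1 | ⟨h1, h1'⟩ <;> rcases h2 with h2 | ⟨h2, h2'⟩
    · rw [E1, E2] at h1; rw [E3, E4] at h2; omega
    · rw [E1, E2] at h1; rw [E3, E4] at h2; omega
    · rw [E1, E2] at h1; rw [E3, E4] at h2; omega
    · rw [haq] at h1'
      rw [hap] at h2'
      exact absurd (lt_trans h1' h2') (lt_irrefl _)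
  have all : ∀ (v : ℕ) (j : Fin d), (j : ℕ) = v → a j = a' j := by
    intro v
    induction v using Nat.strong_induction_on with
    | _ v ih =>
      intro j hj
      exact step j (fun p hp => ih (p : ℕ) (by have := Fin.lt_def.mp hp; omega) p rfl)
  exact Equiv.ext (fun j => all (j : ℕ) j rfl)

end ChromAux

namespace ChromAux

variable {d : ℕ} {G : SimpleGraph (Fin d)}

theorem exists_good_perm {n : ℕ} (φ : Fin d → Fin n)
    (hφ : ∀ u v : Fin d, G.Adj u v → φ u ≠ φ v) :
    ∃ a : Equiv.Perm (Fin d), Good G a (fun k => φ (a k)) := by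
  classical
  set μ : Equiv.Perm (Fin d) → ℕ := fun a =>
    (Finset.univ.filter
      (fun pq : Fin d × Fin d => pq.1 < pq.2 ∧ CutRel G a pq.1 pq.2)).card with hμ
  have main : ∀ (N : ℕ) (a : Equiv.Perm (Fin d)), μ a ≤ N →
      Monotone (fun k => φ (a k)) →
      ∃ a' : Equiv.Perm (Fin d), Good G a' (fun k => φ (a' k)) := by
    intro N
    induction N using Nat.strong_induction_on with
    | _ N ih =>
      intro a hμa hmono
      by_cases hgood : ∀ i j : Fin d, (i : ℕ) + 1 = (j : ℕ) → IsCut G a j → φ (a i) < φ (a j)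
      · exact ⟨a, hmono, hgood⟩
      push_neg at hgood
      obtain ⟨i, j, hij, hcut, hnlt⟩ := hgood
      have hijlt : i < j := Fin.lt_def.mpr (by omega)
      have hmle : φ (a i) ≤ φ (a j) := hmono hijlt.le
      have heq : φ (a i) = φ (a j) := le_antisymm hmle hnlt
      have hcr : CutRel G a i j := (isCut_iff hij).mp hcut
      have hna : ¬ G.Adj (a i) (a j) := fun hadj => hφ _ _ hadj heq
      set s := Equiv.swap i j with hs
      set a2 := a * s with ha2
      have ha2app : ∀ k, a2 k = a (s k) := fun k => rfl
      have hell : ∀ k, ell G a2 k = ell G a (s k) := fun k => ell_mul_swap hij hna k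
      have hcr2 : ∀ p q : Fin d, CutRel G a2 p q ↔ CutRel G a (s p) (s q) := by
        intro p q
        unfold CutRel
        rw [hell, hell, ha2app, ha2app]
      -- the colouring sequence is unchanged
      have hfeq : (fun k => φ (a2 k)) = fun k => φ (a k) := by
        funext k
        rcases eq_or_ne k i with rfl | hki
        · rw [ha2app, hs, Equiv.swap_apply_left]
          exact heq.symm
        rcases eq_or_ne k j with rfl | hkj
        · rw [ha2app, hs, Equiv.swap_apply_right]
          exact heq
        · rw [ha2app, hs, Equiv.swap_apply_of_ne_of_ne hki hkj]
      -- the measure decreases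
      have hmem : (i, j) ∈ Finset.univ.filter
          (fun pq : Fin d × Fin d => pq.1 < pq.2 ∧ CutRel G a pq.1 pq.2) := by
        rw [Finset.mem_filter]
        exact ⟨Finset.mem_univ _, hijlt, hcr⟩
      have hdec : μ a2 < μ a := by
        have hcard : μ a2 ≤ ((Finset.univ.filter
            (fun pq : Fin d × Fin d => pq.1 < pq.2 ∧ CutRel G a pq.1 pq.2)).erase (i, j)).card := by
          rw [hμ]
          apply Finset.card_le_card_of_injOn (fun pq => (s pq.1, s pq.2))
          · intro pq hpq
            rw [Finset.mem_coe, Finset.mem_filter] at hpq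
            obtain ⟨-, hlt, hrel⟩ := hpq
            have hrel' : CutRel G a (s pq.1) (s pq.2) := (hcr2 pq.1 pq.2).mp hrel
            have hvp := Fin.lt_def.mp hlt
            have hpij : ¬ (pq.1 = i ∧ pq.2 = j) := by
              rintro ⟨h1, h2⟩
              rw [h1, h2, hs, Equiv.swap_apply_left, Equiv.swap_apply_right] at hrel'
              exact cutRel_asymm hcr hrel'
            have hslt : s pq.1 < s pq.2 := by
              by_cases h1i : pq.1 = i
              · have h2j : pq.2 ≠ j := fun hh => hpij ⟨h1i, hh⟩
                have h2i : pq.2 ≠ i := by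
                  intro hh; rw [h1i, hh] at hlt; exact lt_irrefl _ hlt
                rw [h1i, hs, Equiv.swap_apply_left, Equiv.swap_apply_of_ne_of_ne h2i h2j]
                refine Fin.lt_def.mpr ?_
                have hv1 : (pq.1 : ℕ) = (i : ℕ) := congrArg Fin.val h1i
                have hv2 : (pq.2 : ℕ) ≠ (j : ℕ) := fun hh => h2j (Fin.ext hh)
                omega
              by_cases h1j : pq.1 = j
              · have h2i : pq.2 ≠ i := by
                  intro hh
                  have hv1 : (pq.1 : ℕ) = (j : ℕ) := congrArg Fin.val h1j
                  have hv2 : (pq.2 : ℕ) = (i : ℕ) := congrArg Fin.val hh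
                  omega
                have h2j : pq.2 ≠ j := by
                  intro hh; rw [h1j, hh] at hlt; exact lt_irrefl _ hlt
                rw [h1j, hs, Equiv.swap_apply_right, Equiv.swap_apply_of_ne_of_ne h2i h2j]
                refine Fin.lt_def.mpr ?_
                have hv1 : (pq.1 : ℕ) = (j : ℕ) := congrArg Fin.val h1j
                omega
              by_cases h2i : pq.2 = i
              · rw [h2i, hs, Equiv.swap_apply_left, Equiv.swap_apply_of_ne_of_ne h1i h1j]
                refine Fin.lt_def.mpr ?_
                have hv2 : (pq.2 : ℕ) = (i : ℕ) := congrArg Fin.val h2i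
                omega
              by_cases h2j : pq.2 = j
              · rw [h2j, hs, Equiv.swap_apply_right, Equiv.swap_apply_of_ne_of_ne h1i h1j]
                refine Fin.lt_def.mpr ?_
                have hv1 : (pq.1 : ℕ) ≠ (i : ℕ) := fun hh => h1i (Fin.ext hh)
                have hv2 : (pq.2 : ℕ) = (j : ℕ) := congrArg Fin.val h2j
                omega
              · rw [hs, Equiv.swap_apply_of_ne_of_ne h1i h1j,
                  Equiv.swap_apply_of_ne_of_ne h2i h2j]
                exact hlt
            rw [Finset.mem_coe, Finset.mem_erase, Finset.mem_filter]
            refine ⟨?_, Finset.mem_univ _, hslt, hrel'⟩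
            intro hh
            have h1 : s pq.1 = i := congrArg Prod.fst hh
            have h2 : s pq.2 = j := congrArg Prod.snd hh
            have h1' : pq.1 = s i := by rw [← h1, hs, Equiv.swap_apply_self]
            have h2' : pq.2 = s j := by rw [← h2, hs, Equiv.swap_apply_self]
            rw [hs, Equiv.swap_apply_left] at h1'
            rw [hs, Equiv.swap_apply_right] at h2'
            rw [h1', h2'] at hlt
            exact absurd hijlt (not_lt.mpr hlt.le)
          · intro x hx y hy hxy
            have h1 : s x.1 = s y.1 := congrArg Prod.fst hxy
            have h2 : s x.2 = s y.2 := congrArg Prod.snd hxy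
            exact Prod.ext (s.injective h1) (s.injective h2)
        have herase := Finset.card_erase_of_mem hmem
        have hpos : 0 < (Finset.univ.filter
            (fun pq : Fin d × Fin d => pq.1 < pq.2 ∧ CutRel G a pq.1 pq.2)).card :=
          Finset.card_pos.mpr ⟨_, hmem⟩
        have hμa' : μ a = (Finset.univ.filter
            (fun pq : Fin d × Fin d => pq.1 < pq.2 ∧ CutRel G a pq.1 pq.2)).card := rfl
        omega
      have hlt : μ a2 < N := lt_of_lt_of_le hdec hμa
      exact ih (μ a2) hlt a2 le_rfl (hfeq ▸ hmono)
  exact main (μ (Tuple.sort φ)) (Tuple.sort φ) le_rfl (Tuple.monotone_sort φ)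

end ChromAux

/-- `χ_G(n) = Σ_{π ∈ S_d} C(n + d − c(π), d)`. -/
theorem chromVal_eq_sum_choose {d : ℕ} (hd : 1 ≤ d) (G : SimpleGraph (Fin d)) (n : ℕ) :
    chromVal G n = ∑ π : Equiv.Perm (Fin d), Nat.choose (n + d - numCuts G π) d := by
  classical
  have hbij : Function.Bijective
      (fun x : Σ a : Equiv.Perm (Fin d), {b : Fin d → Fin n // ChromAux.Good G a b} =>
        (⟨fun v => x.2.1 (x.1⁻¹ v), fun u v hadj => ChromAux.forward_proper x.2.2 u v hadj⟩ :
          {φ : Fin d → Fin n // ∀ u v : Fin d, G.Adj u v → φ u ≠ φ v})) := by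
    constructor
    · rintro ⟨a, b, hb⟩ ⟨a', b', hb'⟩ hxy
      have hfun : ∀ v, b (a⁻¹ v) = b' (a'⁻¹ v) := fun v =>
        congrFun (congrArg Subtype.val hxy) v
      have haa : a = a' := ChromAux.perm_unique hb hb' hfun
      subst haa
      have hbb : b = b' := by
        funext k
        have hk := hfun (a k)
        rwa [show a⁻¹ (a k) = k from a.symm_apply_apply k] at hk
      subst hbb
      rfl
    · rintro ⟨φ, hφ⟩
      obtain ⟨a, hg⟩ := ChromAux.exists_good_perm φ hφ
      refine ⟨⟨a, ⟨fun k => φ (a k), hg⟩⟩, ?_⟩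
      apply Subtype.ext
      funext v
      show φ (a (a⁻¹ v)) = φ v
      rw [show a (a⁻¹ v) = v from a.apply_symm_apply v]
  have hcard : chromVal G n
      = Nat.card (Σ a : Equiv.Perm (Fin d), {b : Fin d → Fin n // ChromAux.Good G a b}) := by
    rw [chromVal]
    exact (Nat.card_eq_of_bijective _ hbij).symm
  rw [hcard, Nat.card_eq_fintype_card, Fintype.card_sigma]
  apply Finset.sum_congr rfl
  intro a _
  rw [← Nat.card_eq_fintype_card, ChromAux.card_good hd n a]
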